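/- Let n ≥ 1, let ε ∈ ℝⁿ, Γ, Σ ∈ S_n, Θ ∈ A_n, and c ∈ ℝ. Suppose the complex Hermitian matrix S := Σ + (i/2)Θ is positive definite. Define the linear operator K on S_n by K(R) := ΣRΣ + ΘRΘ/4, and define Q(α, β, R) := c − 2 εᵀβ − ⟨Γ, R⟩ + α² + α⟨Σ, R⟩ + βᵀΣβ + ⟨R, ⟨Σ, R⟩Σ + 2K(R)⟩/4 on ℝ × ℝⁿ × S_n. Then K is invertible, and Q has a unique global minimizer (α⋄, β⋄, R⋄), given by R⋄ = K⁻¹(Γ), β⋄ = Σ⁻¹ε, and α⋄ = −⟨Σ, R⋄⟩/2. -/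

import Mathlib

open Matrix ComplexOrder

section GaussianHelpers
open Complex
variable {n : ℕ}


private lemma trace_map' (M : Matrix (Fin n) (Fin n) ℝ) :
    (M.map Complex.ofReal).trace = (M.trace : ℂ) := by
  simp [Matrix.trace, Matrix.diag, Matrix.map_apply]

private lemma map_mul' (A B : Matrix (Fin n) (Fin n) ℝ) :
    (A * B).map Complex.ofReal = A.map Complex.ofReal * B.map Complex.ofReal :=
  Matrix.map_mul (f := Complex.ofRealHom)

private lemma map_add' (A B : Matrix (Fin n) (Fin n) ℝ) :
    (A + B).map Complex.ofReal = A.map Complex.ofReal + B.map Complex.ofReal := by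
  ext i j; simp

private lemma map_smul' (r : ℝ) (M : Matrix (Fin n) (Fin n) ℝ) :
    (r • M).map Complex.ofReal = (r : ℂ) • M.map Complex.ofReal := by
  ext i j; simp

private lemma map_transpose' (M : Matrix (Fin n) (Fin n) ℝ) :
    (Mᵀ).map Complex.ofReal = (M.map Complex.ofReal)ᵀ := by
  ext i j; simp

private lemma cross_zero (Rc A C : Matrix (Fin n) (Fin n) ℂ) (hA : Aᵀ = A) (hC : Cᵀ = -C) :
    (Rcᵀ * C * Rc * A).trace = 0 := by
  have h : (Rcᵀ * C * Rc * A).trace = -(Rcᵀ * C * Rc * A).trace := by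
    conv_lhs => rw [← Matrix.trace_transpose]
    have e : (Rcᵀ * C * Rc * A)ᵀ = -(A * (Rcᵀ * C * Rc)) := by
      simp [Matrix.transpose_mul, Matrix.mul_assoc, hA, hC, Matrix.mul_neg, Matrix.neg_mul]
    rw [e, Matrix.trace_neg, Matrix.trace_mul_comm]
  linear_combination h / 2

private lemma cross_zero' (Rc A C : Matrix (Fin n) (Fin n) ℂ) (hA : Aᵀ = -A) (hC : Cᵀ = C) :
    (Rcᵀ * C * Rc * A).trace = 0 := by
  have h : (Rcᵀ * C * Rc * A).trace = -(Rcᵀ * C * Rc * A).trace := by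
    conv_lhs => rw [← Matrix.trace_transpose]
    have e : (Rcᵀ * C * Rc * A)ᵀ = -(A * (Rcᵀ * C * Rc)) := by
      simp [Matrix.transpose_mul, Matrix.mul_assoc, hA, hC, Matrix.mul_neg, Matrix.neg_mul]
    rw [e, Matrix.trace_neg, Matrix.trace_mul_comm]
  linear_combination h / 2

set_option maxHeartbeats 1000000 in
private lemma key_pos (Sgm Θ : Matrix (Fin n) (Fin n) ℝ) (hSgmSymm : Sgm.IsSymm) (hΘ : Θᵀ = -Θ)
    (hS : (Sgm.map Complex.ofReal + (Complex.I / 2) • Θ.map Complex.ofReal).PosDef)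
    (R : Matrix (Fin n) (Fin n) ℝ) (hR : R ≠ 0) :
    0 < (Rᵀ * (Sgm * R * Sgm + (1/4 : ℝ) • (Θ * R * Θ))).trace := by
  classical
  set Sgc := Sgm.map Complex.ofReal with hDefSgc
  set Θc := Θ.map Complex.ofReal with hDefΘc
  set Sc := Sgc + (Complex.I / 2) • Θc with hDefSc
  set Rc := R.map Complex.ofReal with hDefRc
  have hSgct : Sgcᵀ = Sgc := by
    rw [hDefSgc, ← map_transpose', show Sgmᵀ = Sgm from hSgmSymm]
  have hΘct : Θcᵀ = -Θc := by
    rw [hDefΘc, ← map_transpose', hΘ]; ext i j; simp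
  have hps : Sc.PosSemidef := hS.posSemidef
  obtain ⟨P, hP2, hPh⟩ : ∃ P : Matrix (Fin n) (Fin n) ℂ, P * P = Sc ∧ Pᴴ = P := by
    open scoped MatrixOrder in
    exact ⟨CFC.sqrt Sc, CFC.sqrt_mul_sqrt_self Sc hps.nonneg, (CFC.sqrt_nonneg Sc).posSemidef.1⟩
  have hdetS : Sc.det ≠ 0 := hS.det_pos.ne'
  have hdetP : P.det ≠ 0 := by
    intro h
    apply hdetS
    rw [← hP2, Matrix.det_mul, h, mul_zero]
  set Pb := P.map (starRingEnd ℂ) with hDefPb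
  set B := P * Rc * Pᵀ with hDefB
  have hRcne : Rc ≠ 0 := by
    intro h
    apply hR
    ext i j
    have := congrFun (congrFun h i) j
    simpa [hDefRc, Matrix.map_apply] using this
  have hBne : B ≠ 0 := by
    intro h
    apply hRcne
    have hPu : IsUnit P.det := isUnit_iff_ne_zero.mpr hdetP
    have hPtu : IsUnit (Pᵀ).det := by rwa [Matrix.det_transpose]
    have h2 : P⁻¹ * B * (Pᵀ)⁻¹ = Rc := by
      rw [hDefB]
      rw [show P⁻¹ * (P * Rc * Pᵀ) * (Pᵀ)⁻¹ = (P⁻¹ * P) * Rc * (Pᵀ * (Pᵀ)⁻¹) by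
        simp [Matrix.mul_assoc]]
      rw [Matrix.nonsing_inv_mul _ hPu, Matrix.mul_nonsing_inv _ hPtu, Matrix.one_mul,
        Matrix.mul_one]
    rw [← h2, h, Matrix.mul_zero, Matrix.zero_mul]
  -- conjugate relation
  have hreal1 : ∀ i j, (starRingEnd ℂ) (Sgc i j) = Sgc i j := by
    intro i j; simp [hDefSgc, Matrix.map_apply]
  have hreal2 : ∀ i j, (starRingEnd ℂ) (Θc i j) = Θc i j := by
    intro i j; simp [hDefΘc, Matrix.map_apply]
  have hSbar : Pᵀ * Pb = Sgc - (Complex.I / 2) • Θc := by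
    have hPHP : Pᴴ * P = Sc := by rw [hPh, hP2]
    ext i j
    have h1 : Sc i j = ∑ k, (starRingEnd ℂ) (P k i) * P k j := by
      rw [← hPHP]; simp [Matrix.mul_apply, Matrix.conjTranspose_apply]
    have h2 : (Pᵀ * Pb) i j = (starRingEnd ℂ) (Sc i j) := by
      rw [h1]; simp [Matrix.mul_apply, hDefPb, Matrix.map_apply, map_sum, mul_comm]
    rw [h2, hDefSc]
    simp [Matrix.add_apply, Matrix.sub_apply, Matrix.smul_apply, hreal1, hreal2, smul_eq_mul]
    have h3 : ((starRingEnd ℂ) 2) = 2 := map_ofNat _ 2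
    rw [h3]
    ring
  -- trace identity
  have htrace : ((Rᵀ * (Sgm * R * Sgm + (1/4 : ℝ) • (Θ * R * Θ))).trace : ℂ)
      = (Bᴴ * B).trace := by
    have lhs1 : ((Rᵀ * (Sgm * R * Sgm + (1/4 : ℝ) • (Θ * R * Θ))).trace : ℂ)
        = (Rcᵀ * (Sgc * Rc * Sgc) + (1/4 : ℂ) • (Rcᵀ * (Θc * Rc * Θc))).trace := by
      rw [← trace_map']
      congr 1
      rw [map_mul', map_add', map_mul', map_mul', map_smul', map_mul', map_mul',
        map_transpose']
      rw [Matrix.mul_add, Matrix.mul_smul]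
      norm_num
      rfl
    have hRcH : Rcᴴ = Rcᵀ := by
      ext i j; simp [hDefRc, Matrix.conjTranspose_apply, Matrix.map_apply]
    have hPtH : (Pᵀ)ᴴ = Pb := by
      ext i j; simp [hDefPb, Matrix.conjTranspose_apply, Matrix.map_apply]
    have hBH : Bᴴ = Pb * (Rcᵀ * P) := by
      rw [hDefB, Matrix.conjTranspose_mul, Matrix.conjTranspose_mul, hPtH, hRcH, hPh]
    have rhs1 : (Bᴴ * B).trace = (Rcᵀ * ((Sgc + (Complex.I/2) • Θc)
        * (Rc * (Sgc - (Complex.I/2) • Θc)))).trace := by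
      rw [hBH, hDefB, Matrix.mul_assoc, Matrix.trace_mul_comm, ← hSbar, ← hDefSc, ← hP2]
      congr 1
      simp [Matrix.mul_assoc]
    rw [lhs1, rhs1]
    have c1 : (Rcᵀ * Θc * Rc * Sgc).trace = 0 := cross_zero Rc Sgc Θc hSgct hΘct
    have c2 : (Rcᵀ * Sgc * Rc * Θc).trace = 0 := cross_zero' Rc Θc Sgc hΘct hSgct
    simp only [Matrix.mul_add, Matrix.add_mul, Matrix.mul_sub, Matrix.sub_mul,
      Matrix.smul_mul, Matrix.mul_smul, Matrix.trace_add, Matrix.trace_sub,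
      Matrix.trace_smul, smul_smul, smul_eq_mul, ← Matrix.mul_assoc]
    rw [c1, c2]
    ring_nf
    rw [Complex.I_sq]
    ring
  have htr2 : (Bᴴ * B).trace = ((∑ i, ∑ j, Complex.normSq (B j i) : ℝ) : ℂ) := by
    push_cast
    simp [Matrix.trace, Matrix.diag, Matrix.mul_apply, Matrix.conjTranspose_apply,
      Complex.normSq_eq_conj_mul_self]
  have hpos : 0 < ((∑ i, ∑ j, Complex.normSq (B j i)) : ℝ) := by
    have hex : ∃ i j, B i j ≠ 0 := by
      by_contra h
      push_neg at h
      exact hBne (by ext i j; simpa using h i j)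
    obtain ⟨i0, j0, h0⟩ := hex
    refine Finset.sum_pos'
      (fun i _ => Finset.sum_nonneg fun j _ => Complex.normSq_nonneg _)
      ⟨j0, Finset.mem_univ _, ?_⟩
    refine Finset.sum_pos' (fun j _ => Complex.normSq_nonneg _)
      ⟨i0, Finset.mem_univ _, ?_⟩
    exact Complex.normSq_pos.mpr h0
  have hfin := htrace.trans htr2
  rw [Complex.ofReal_inj] at hfin
  rw [hfin]
  exact hpos

private lemma symm_trace (X Y : Matrix (Fin n) (Fin n) ℝ) :
    (Xᵀ * Y).trace = (Yᵀ * X).trace := by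
  rw [← Matrix.trace_transpose (Xᵀ * Y), Matrix.transpose_mul, Matrix.transpose_transpose]

private lemma sandwich_adj (M A B : Matrix (Fin n) (Fin n) ℝ) (hM : M * A * M = (M * Aᵀ * M)ᵀ) :
    (Aᵀ * (M * B * M)).trace = (Bᵀ * (M * A * M)).trace := by
  rw [show Aᵀ * (M * B * M) = (Aᵀ * M * B) * M by simp [Matrix.mul_assoc]]
  rw [Matrix.trace_mul_comm]
  rw [show M * (Aᵀ * M * B) = (M * Aᵀ * M) * B by simp [Matrix.mul_assoc]]
  rw [show (M * Aᵀ * M) * B = ((M * Aᵀ * M)ᵀ)ᵀ * B by rw [Matrix.transpose_transpose]]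
  rw [symm_trace, ← hM]

private lemma K_adj (Sgm Θ A B : Matrix (Fin n) (Fin n) ℝ) (hSgm : Sgmᵀ = Sgm) (hΘ : Θᵀ = -Θ) :
    (Aᵀ * (Sgm * B * Sgm + (1/4:ℝ) • (Θ * B * Θ))).trace
      = (Bᵀ * (Sgm * A * Sgm + (1/4:ℝ) • (Θ * A * Θ))).trace := by
  rw [Matrix.mul_add, Matrix.mul_add, Matrix.trace_add, Matrix.trace_add,
    Matrix.mul_smul, Matrix.mul_smul, Matrix.trace_smul, Matrix.trace_smul]
  rw [sandwich_adj Sgm A B (by rw [Matrix.transpose_mul, Matrix.transpose_mul, hSgm,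
      Matrix.transpose_transpose]; simp [Matrix.mul_assoc])]
  rw [sandwich_adj Θ A B (by rw [Matrix.transpose_mul, Matrix.transpose_mul, hΘ,
      Matrix.transpose_transpose]; simp [Matrix.mul_assoc])]

private lemma dot_map (x y : Fin n → ℝ) (M : Matrix (Fin n) (Fin n) ℝ) :
    (fun i => ((x i : ℂ))) ⬝ᵥ ((M.map Complex.ofReal) *ᵥ fun i => ((y i : ℂ)))
      = ((x ⬝ᵥ (M *ᵥ y) : ℝ) : ℂ) := by
  simp [dotProduct, Matrix.mulVec, Matrix.map_apply, Finset.mul_sum]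

private lemma antisym_dot (Θ : Matrix (Fin n) (Fin n) ℝ) (hΘ : Θᵀ = -Θ) (x : Fin n → ℝ) :
    x ⬝ᵥ (Θ *ᵥ x) = 0 := by
  have h : x ⬝ᵥ (Θ *ᵥ x) = - (x ⬝ᵥ (Θ *ᵥ x)) := by
    calc x ⬝ᵥ (Θ *ᵥ x) = (Θᵀ *ᵥ x) ⬝ᵥ x := by
          rw [Matrix.dotProduct_mulVec, Matrix.mulVec_transpose]
      _ = x ⬝ᵥ (Θᵀ *ᵥ x) := dotProduct_comm _ _
      _ = - (x ⬝ᵥ (Θ *ᵥ x)) := by rw [hΘ, Matrix.neg_mulVec, dotProduct_neg]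
  linarith

private lemma sigma_posDef (Sgm Θ : Matrix (Fin n) (Fin n) ℝ) (hSgmSymm : Sgm.IsSymm)
    (hΘ : Θᵀ = -Θ)
    (hS : (Sgm.map (Complex.ofReal) +
      (Complex.I / 2) • Θ.map (Complex.ofReal)).PosDef) : Sgm.PosDef := by
  rw [Matrix.posDef_iff_dotProduct_mulVec]
  constructor
  · show Sgmᴴ = Sgm
    rw [Matrix.conjTranspose]
    have h : Sgmᵀ = Sgm := hSgmSymm
    rw [h]
    ext i j; simp
  · intro x hx
    have hxc : (fun i => ((x i : ℂ))) ≠ 0 := by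
      intro h
      apply hx
      funext i
      have := congrFun h i
      simpa using this
    have h2 := hS.dotProduct_mulVec_pos hxc
    have hstar : star (fun i => ((x i : ℂ))) = fun i => ((x i : ℂ)) := by
      funext i; simp
    rw [hstar, Matrix.add_mulVec, dotProduct_add, Matrix.smul_mulVec,
      dotProduct_smul, dot_map, dot_map, antisym_dot Θ hΘ] at h2
    simp only [Complex.ofReal_zero, smul_zero, add_zero] at h2
    rwa [← Complex.zero_lt_real]

end GaussianHelpers

set_option maxHeartbeats 1000000 in
/-- Theorem 2 of the paper: Gaussian-state specialization of the mean square
optimal quadratic approximation.  Here the third-moment map vanishes and the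
fourth-moment operator is `Ψ(R) = ⟨Σ,R⟩Σ + 2K(R)` with
`K(R) = ΣRΣ + ΘRΘ/4`.  If the quantum covariance matrix `S = Σ + (i/2)Θ` is
positive definite, then `K` is invertible (as an operator on `S_n`), the cost
`Q` has a unique global minimizer, and the minimizer `(α⋄, β⋄, R⋄)` satisfies
`K(R⋄) = Γ` (i.e. `R⋄ = K⁻¹(Γ)`), `β⋄ = Σ⁻¹ε` and `α⋄ = −⟨Σ, R⋄⟩/2`. -/
theorem gaussian_state_optimal_quadratic_approximation
    {n : ℕ} (hn : 1 ≤ n)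
    (ε : Fin n → ℝ) (Γ Sgm Θ : Matrix (Fin n) (Fin n) ℝ) (c : ℝ)
    (hΓ : Γ.IsSymm) (hSgmSymm : Sgm.IsSymm) (hΘ : Θᵀ = -Θ)
    (hS : (Sgm.map (Complex.ofReal) +
      (Complex.I / 2) • Θ.map (Complex.ofReal)).PosDef)
    (K : Matrix (Fin n) (Fin n) ℝ → Matrix (Fin n) (Fin n) ℝ)
    (hK : ∀ R : Matrix (Fin n) (Fin n) ℝ,
      K R = Sgm * R * Sgm + (1 / 4 : ℝ) • (Θ * R * Θ))
    (Q : ℝ → (Fin n → ℝ) → Matrix (Fin n) (Fin n) ℝ → ℝ)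
    (hQ : ∀ (α : ℝ) (β : Fin n → ℝ) (R : Matrix (Fin n) (Fin n) ℝ),
      Q α β R = c - 2 * (ε ⬝ᵥ β) - (Γ * R).trace + α ^ 2
        + α * (Sgm * R).trace + β ⬝ᵥ (Sgm *ᵥ β)
        + (R * ((Sgm * R).trace • Sgm + (2 : ℝ) • K R)).trace / 4) :
    (∀ Y : Matrix (Fin n) (Fin n) ℝ, Y.IsSymm →
      ∃! R : Matrix (Fin n) (Fin n) ℝ, R.IsSymm ∧ K R = Y) ∧
    (∃! p : ℝ × (Fin n → ℝ) × Matrix (Fin n) (Fin n) ℝ,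
      p.2.2.IsSymm ∧
      ∀ q : ℝ × (Fin n → ℝ) × Matrix (Fin n) (Fin n) ℝ,
        q.2.2.IsSymm → Q p.1 p.2.1 p.2.2 ≤ Q q.1 q.2.1 q.2.2) ∧
    (∀ p : ℝ × (Fin n → ℝ) × Matrix (Fin n) (Fin n) ℝ,
      p.2.2.IsSymm →
      (∀ q : ℝ × (Fin n → ℝ) × Matrix (Fin n) (Fin n) ℝ,
        q.2.2.IsSymm → Q p.1 p.2.1 p.2.2 ≤ Q q.1 q.2.1 q.2.2) →
      K p.2.2 = Γ ∧
      p.2.1 = Sgm⁻¹ *ᵥ ε ∧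
      p.1 = -(Sgm * p.2.2).trace / 2) := by
  
  classical
  have hSgmT : Sgmᵀ = Sgm := hSgmSymm
  have hSgPD : Sgm.PosDef := sigma_posDef Sgm Θ hSgmSymm hΘ hS
  have hkey := key_pos Sgm Θ hSgmSymm hΘ hS
  have hKpos : ∀ M : Matrix (Fin n) (Fin n) ℝ, M ≠ 0 → 0 < (Mᵀ * K M).trace := by
    intro M h; rw [hK]; exact hkey M h
  have hKnonneg : ∀ M : Matrix (Fin n) (Fin n) ℝ, 0 ≤ (Mᵀ * K M).trace := by
    intro M
    rcases eq_or_ne M 0 with h | h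
    · subst h; simp
    · exact (hKpos M h).le
  have hKsub : ∀ A B, K (A - B) = K A - K B := by
    intro A B; simp only [hK, Matrix.mul_sub, Matrix.sub_mul, smul_sub]; abel
  have hKinj : ∀ A B, K A = K B → A = B := by
    intro A B h
    by_contra hne
    have hR : A - B ≠ 0 := sub_ne_zero.mpr hne
    have h0 : ((A - B)ᵀ * K (A - B)).trace = 0 := by
      rw [hKsub, h, sub_self, Matrix.mul_zero, Matrix.trace_zero]
    exact absurd h0 (hKpos _ hR).ne'
  have hKsurj : Function.Surjective K := by
    let Klin : Matrix (Fin n) (Fin n) ℝ →ₗ[ℝ] Matrix (Fin n) (Fin n) ℝ :=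
      { toFun := fun R => Sgm * R * Sgm + (1/4 : ℝ) • (Θ * R * Θ)
        map_add' := fun A B => by
          simp only [Matrix.mul_add, Matrix.add_mul, smul_add]; abel
        map_smul' := fun r A => by
          simp only [Matrix.mul_smul, Matrix.smul_mul, smul_add, RingHom.id_apply,
            smul_comm r (1/4:ℝ)] }
    have hKeq : ∀ R, Klin R = K R := fun R => (hK R).symm
    have hinj : Function.Injective Klin := by
      intro A B h
      apply hKinj
      rw [← hKeq, ← hKeq]
      exact h
    have hsurj := LinearMap.injective_iff_surjective.mp hinj
    intro Y
    obtain ⟨R, hR⟩ := hsurj Y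
    exact ⟨R, by rw [← hKeq]; exact hR⟩
  have hKtrans : ∀ R, K Rᵀ = (K R)ᵀ := by
    intro R
    rw [hK, hK, Matrix.transpose_add, Matrix.transpose_smul, Matrix.transpose_mul,
      Matrix.transpose_mul, Matrix.transpose_mul, Matrix.transpose_mul, hSgmT, hΘ]
    simp [Matrix.mul_assoc]
  have part1 : ∀ Y : Matrix (Fin n) (Fin n) ℝ, Y.IsSymm →
      ∃! R : Matrix (Fin n) (Fin n) ℝ, R.IsSymm ∧ K R = Y := by
    intro Y hY
    obtain ⟨R, hR⟩ := hKsurj Y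
    have hRsym : R.IsSymm := by
      apply hKinj
      rw [hKtrans, hR]
      exact hY
    exact ⟨R, ⟨hRsym, hR⟩, fun R' hR' => hKinj _ _ (hR'.2.trans hR.symm)⟩
  -- distinguished minimizer
  obtain ⟨Rd, ⟨hRdsym, hRdK⟩, -⟩ := part1 Γ hΓ
  have hRdT : Rdᵀ = Rd := hRdsym
  set βd := Sgm⁻¹ *ᵥ ε with hβddef
  have hdetu : IsUnit Sgm.det := isUnit_iff_ne_zero.mpr hSgPD.det_pos.ne'
  have hβd : Sgm *ᵥ βd = ε := by
    rw [hβddef, Matrix.mulVec_mulVec, Matrix.mul_nonsing_inv _ hdetu, Matrix.one_mulVec]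
  set αd := -(Sgm * Rd).trace / 2 with hαddef
  have hdotpos : ∀ v : Fin n → ℝ, v ≠ 0 → 0 < v ⬝ᵥ (Sgm *ᵥ v) := by
    intro v hv
    have := hSgPD.dotProduct_mulVec_pos hv
    simpa using this
  have hdotnn : ∀ v : Fin n → ℝ, 0 ≤ v ⬝ᵥ (Sgm *ᵥ v) := by
    intro v
    rcases eq_or_ne v 0 with h | h
    · subst h; simp
    · exact (hdotpos v h).le
  have hadj : ∀ A B, (Aᵀ * K B).trace = (Bᵀ * K A).trace := by
    intro A B; rw [hK, hK]; exact K_adj Sgm Θ A B hSgmT hΘ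
  -- the main completing-the-square identity
  have main : ∀ (α : ℝ) (β : Fin n → ℝ) (R : Matrix (Fin n) (Fin n) ℝ), R.IsSymm →
      Q α β R - Q αd βd Rd
      = (α + (Sgm * R).trace / 2) ^ 2 + ((β - βd) ⬝ᵥ (Sgm *ᵥ (β - βd)))
        + ((R - Rd)ᵀ * (K (R - Rd))).trace / 2 := by
    intro α β R hRs
    have hRsT : Rᵀ = R := hRs
    rw [hQ, hQ]
    have e1 : (Γ * R).trace = (Rᵀ * K Rd).trace := by
      rw [← hRdK, Matrix.trace_mul_comm,
        show R * K Rd = Rᵀ * K Rd by rw [hRsT]]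
    have e2 : (Γ * Rd).trace = (Rdᵀ * K Rd).trace := by
      rw [← hRdK, Matrix.trace_mul_comm,
        show Rd * K Rd = Rdᵀ * K Rd by rw [hRdT]]
    have e3 : (R * ((Sgm * R).trace • Sgm + (2:ℝ) • K R)).trace
        = (Sgm * R).trace * (Sgm * R).trace + 2 * (Rᵀ * K R).trace := by
      rw [Matrix.mul_add, Matrix.trace_add, Matrix.mul_smul, Matrix.mul_smul,
        Matrix.trace_smul, Matrix.trace_smul, smul_eq_mul, smul_eq_mul,
        Matrix.trace_mul_comm R Sgm,
        show R * K R = Rᵀ * K R by rw [hRsT]]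
    have e4 : (Rd * ((Sgm * Rd).trace • Sgm + (2:ℝ) • K Rd)).trace
        = (Sgm * Rd).trace * (Sgm * Rd).trace + 2 * (Rdᵀ * K Rd).trace := by
      rw [Matrix.mul_add, Matrix.trace_add, Matrix.mul_smul, Matrix.mul_smul,
        Matrix.trace_smul, Matrix.trace_smul, smul_eq_mul, smul_eq_mul,
        Matrix.trace_mul_comm Rd Sgm,
        show Rd * K Rd = Rdᵀ * K Rd by rw [hRdT]]
    have e5 : (Rdᵀ * K R).trace = (Rᵀ * K Rd).trace := hadj Rd R
    have e6 : ((R - Rd)ᵀ * K (R - Rd)).trace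
        = (Rᵀ * K R).trace - 2 * (Rᵀ * K Rd).trace + (Rdᵀ * K Rd).trace := by
      rw [hKsub, Matrix.transpose_sub, Matrix.sub_mul, Matrix.mul_sub, Matrix.mul_sub,
        Matrix.trace_sub, Matrix.trace_sub, Matrix.trace_sub, e5]
      ring
    have e7 : βd ⬝ᵥ (Sgm *ᵥ βd) = ε ⬝ᵥ βd := by
      rw [hβd, dotProduct_comm]
    have e8 : β ⬝ᵥ (Sgm *ᵥ βd) = ε ⬝ᵥ β := by
      rw [hβd, dotProduct_comm]
    have e9 : βd ⬝ᵥ (Sgm *ᵥ β) = ε ⬝ᵥ β := by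
      rw [Matrix.dotProduct_mulVec, ← Matrix.mulVec_transpose, hSgmT, hβd]
    have e10 : (β - βd) ⬝ᵥ (Sgm *ᵥ (β - βd))
        = β ⬝ᵥ (Sgm *ᵥ β) - 2 * (ε ⬝ᵥ β) + ε ⬝ᵥ βd := by
      rw [Matrix.mulVec_sub, sub_dotProduct, dotProduct_sub,
        dotProduct_sub, e7, e8, e9]
      ring
    rw [e1, e2, e3, e4, e6, e7, e10, hαddef]
    ring
  have hmin : ∀ q : ℝ × (Fin n → ℝ) × Matrix (Fin n) (Fin n) ℝ,
      q.2.2.IsSymm → Q αd βd Rd ≤ Q q.1 q.2.1 q.2.2 := by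
    intro q hq
    have h := main q.1 q.2.1 q.2.2 hq
    have h1 : 0 ≤ (q.1 + (Sgm * q.2.2).trace / 2) ^ 2 := sq_nonneg _
    have h2 : 0 ≤ (q.2.1 - βd) ⬝ᵥ (Sgm *ᵥ (q.2.1 - βd)) := hdotnn _
    have h3 : 0 ≤ ((q.2.2 - Rd)ᵀ * K (q.2.2 - Rd)).trace := hKnonneg _
    linarith
  have hchar : ∀ p : ℝ × (Fin n → ℝ) × Matrix (Fin n) (Fin n) ℝ, p.2.2.IsSymm →
      (∀ q : ℝ × (Fin n → ℝ) × Matrix (Fin n) (Fin n) ℝ,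
        q.2.2.IsSymm → Q p.1 p.2.1 p.2.2 ≤ Q q.1 q.2.1 q.2.2) →
      p.1 = αd ∧ p.2.1 = βd ∧ p.2.2 = Rd := by
    intro p hp hpmin
    have hle := hpmin (αd, βd, Rd) hRdsym
    have hge := hmin p hp
    have heq : Q p.1 p.2.1 p.2.2 - Q αd βd Rd = 0 := by linarith
    have h := main p.1 p.2.1 p.2.2 hp
    rw [heq] at h
    have h1 : 0 ≤ (p.1 + (Sgm * p.2.2).trace / 2) ^ 2 := sq_nonneg _
    have h2 : 0 ≤ (p.2.1 - βd) ⬝ᵥ (Sgm *ᵥ (p.2.1 - βd)) := hdotnn _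
    have h3 : 0 ≤ ((p.2.2 - Rd)ᵀ * K (p.2.2 - Rd)).trace := hKnonneg _
    have hz3 : p.2.2 = Rd := by
      by_contra hne
      have := hKpos _ (sub_ne_zero.mpr hne)
      linarith
    have hz2 : p.2.1 = βd := by
      by_contra hne
      have := hdotpos _ (sub_ne_zero.mpr hne)
      linarith
    have hz1 : p.1 = αd := by
      have hsq : (p.1 + (Sgm * p.2.2).trace / 2) ^ 2 = 0 := by linarith
      have := pow_eq_zero_iff (n := 2) (by norm_num) |>.mp hsq
      rw [hz3] at this
      rw [hαddef]
      linarith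
    exact ⟨hz1, hz2, hz3⟩
  refine ⟨part1, ⟨(αd, βd, Rd), ⟨hRdsym, hmin⟩, ?_⟩, ?_⟩
  · intro p hp
    obtain ⟨h1, h2, h3⟩ := hchar p hp.1 hp.2
    exact Prod.ext h1 (Prod.ext h2 h3)
  · intro p hp hpmin
    obtain ⟨h1, h2, h3⟩ := hchar p hp hpmin
    refine ⟨?_, h2, ?_⟩
    · rw [h3]; exact hRdK
    · rw [h3, h1, hαddef]
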